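/- If a sequent Γ → C is derivable in the Lambek calculus with brackets Lb* (allowing empty antecedents), then its bracket-free translation — replacing brackets by fresh variables r, s, replacing ⟨⟩A by r·A·s and []⁻¹A by r\A/s, and replacing each meta-bracket [Δ] in the antecedent by the sequence r, Δ, s — is derivable in the Lambek calculus L* (allowing empty antecedents). -/

import Mathlib

/-- Formulas of the Lambek calculus with brackets `Lb*`. -/
inductive Fm where
  | var : ℕ → Fm
  | mul : Fm → Fm → Fm        -- A · B
  | ldiv : Fm → Fm → Fm       -- A \ B
  | rdiv : Fm → Fm → Fm       -- B / A   (rdiv B A)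
  | dia : Fm → Fm             -- ⟨⟩A
  | box : Fm → Fm             -- []⁻¹A

/-- Items of a configuration: formulas or bracketed configurations. -/
inductive Item where
  | fml : Fm → Item
  | brk : List Item → Item

/-- Configurations (bracketed antecedents): sequences of items. -/
abbrev Cfg := List Item

/-- Configuration contexts: a configuration with a hole, possibly nested
inside brackets. -/
inductive Ctx where
  | top : Cfg → Cfg → Ctx
  | nest : Cfg → Ctx → Cfg → Ctx

/-- Plugging a configuration into the hole of a context. -/
def plug : Ctx → Cfg → Cfg
  | .top pre post, Γ => pre ++ Γ ++ post
  | .nest pre c post, Γ => pre ++ [Item.brk (plug c Γ)] ++ post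

/-- Derivability in `Lb*` (the Lambek calculus with brackets, allowing empty
antecedents). -/
inductive DerLb : Cfg → Fm → Prop where
  | ax (p : ℕ) : DerLb [.fml (.var p)] (.var p)
  | ldivL (Δ : Ctx) (Pi : Cfg) (A B C : Fm) :
      DerLb Pi A → DerLb (plug Δ [.fml B]) C →
      DerLb (plug Δ (Pi ++ [.fml (.ldiv A B)])) C
  | ldivR (Pi : Cfg) (A B : Fm) :
      DerLb (.fml A :: Pi) B → DerLb Pi (.ldiv A B)
  | rdivL (Δ : Ctx) (Pi : Cfg) (A B C : Fm) :
      DerLb Pi A → DerLb (plug Δ [.fml B]) C →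
      DerLb (plug Δ (.fml (.rdiv B A) :: Pi)) C
  | rdivR (Pi : Cfg) (A B : Fm) :
      DerLb (Pi ++ [.fml A]) B → DerLb Pi (.rdiv B A)
  | mulL (Δ : Ctx) (A B C : Fm) :
      DerLb (plug Δ [.fml A, .fml B]) C → DerLb (plug Δ [.fml (.mul A B)]) C
  | mulR (Γ Δ : Cfg) (A B : Fm) :
      DerLb Γ A → DerLb Δ B → DerLb (Γ ++ Δ) (.mul A B)
  | diaL (Δ : Ctx) (A C : Fm) :
      DerLb (plug Δ [.brk [.fml A]]) C → DerLb (plug Δ [.fml (.dia A)]) C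
  | diaR (Pi : Cfg) (A : Fm) :
      DerLb Pi A → DerLb [.brk Pi] (.dia A)
  | boxL (Δ : Ctx) (A C : Fm) :
      DerLb (plug Δ [.fml A]) C → DerLb (plug Δ [.brk [.fml (.box A)]]) C
  | boxR (Pi : Cfg) (A : Fm) :
      DerLb [.brk Pi] A → DerLb Pi (.box A)

/-- Formulas of the plain Lambek calculus `L*` (no bracket modalities). -/
inductive PF where
  | var : ℕ → PF
  | mul : PF → PF → PF        -- A · B
  | ldiv : PF → PF → PF       -- A \ B
  | rdiv : PF → PF → PF       -- B / A   (rdiv B A)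

/-- Derivability in `L*` (the Lambek calculus allowing empty antecedents). -/
inductive DerL : List PF → PF → Prop where
  | ax (p : ℕ) : DerL [.var p] (.var p)
  | ldivL (Δ₁ Δ₂ Pi : List PF) (A B C : PF) :
      DerL Pi A → DerL (Δ₁ ++ [B] ++ Δ₂) C →
      DerL (Δ₁ ++ Pi ++ [.ldiv A B] ++ Δ₂) C
  | ldivR (Pi : List PF) (A B : PF) :
      DerL (A :: Pi) B → DerL Pi (.ldiv A B)
  | rdivL (Δ₁ Δ₂ Pi : List PF) (A B C : PF) :
      DerL Pi A → DerL (Δ₁ ++ [B] ++ Δ₂) C →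
      DerL (Δ₁ ++ [.rdiv B A] ++ Pi ++ Δ₂) C
  | rdivR (Pi : List PF) (A B : PF) :
      DerL (Pi ++ [A]) B → DerL Pi (.rdiv B A)
  | mulL (Δ₁ Δ₂ : List PF) (A B C : PF) :
      DerL (Δ₁ ++ [A, B] ++ Δ₂) C → DerL (Δ₁ ++ [.mul A B] ++ Δ₂) C
  | mulR (Γ Δ : List PF) (A B : PF) :
      DerL Γ A → DerL Δ B → DerL (Γ ++ Δ) (.mul A B)

/-- The fresh variable `r` (fresh since translated variables are shifted
by 2). -/
def rV : PF := .var 0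
/-- The fresh variable `s`. -/
def sV : PF := .var 1

/-- The Versmissen-style translation on formulas: `tr(p_i) = p_i` (shifted to
keep `r`, `s` fresh), `tr` commutes with `\`, `/`, `·`, `tr(⟨⟩A) = r·tr(A)·s`,
`tr([]⁻¹A) = r\tr(A)/s`. -/
def trF : Fm → PF
  | .var i => .var (i + 2)
  | .mul A B => .mul (trF A) (trF B)
  | .ldiv A B => .ldiv (trF A) (trF B)
  | .rdiv B A => .rdiv (trF B) (trF A)
  | .dia A => .mul (.mul rV (trF A)) sV
  | .box A => .ldiv rV (.rdiv (trF A) sV)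

mutual
/-- Translation of an item: `tr([Γ]) = r, tr(Γ), s`. -/
def trI : Item → List PF
  | .fml A => [trF A]
  | .brk Γ => rV :: (trC Γ ++ [sV])
/-- Translation of a configuration. -/
def trC : Cfg → List PF
  | [] => []
  | x :: xs => trI x ++ trC xs
end

lemma trC_append (Γ Δ : Cfg) : trC (Γ ++ Δ) = trC Γ ++ trC Δ := by
  induction Γ with
  | nil => simp [trC]
  | cons x xs ih => simp [trC, ih]

/-- Translation of the part of a context to the left of the hole. -/
def trPre : Ctx → List PF
  | .top p _ => trC p
  | .nest p c _ => trC p ++ rV :: trPre c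

/-- Translation of the part of a context to the right of the hole. -/
def trPost : Ctx → List PF
  | .top _ q => trC q
  | .nest _ c q => trPost c ++ sV :: trC q

lemma trC_plug (Δ : Ctx) (Γ : Cfg) :
    trC (plug Δ Γ) = trPre Δ ++ trC Γ ++ trPost Δ := by
  induction Δ with
  | top p q => simp [plug, trPre, trPost, trC_append]
  | nest p c q ih => simp [plug, trPre, trPost, trC_append, trC, trI, ih]

/-- If a sequent `Γ → C` is derivable in the Lambek calculus with brackets
`Lb*`, then its bracket-free translation is derivable in the Lambek calculus
`L*`. -/
theorem stmt12 (Γ : Cfg) (C : Fm) (h : DerLb Γ C) : DerL (trC Γ) (trF C) := by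
  induction h with
  | ax p => exact DerL.ax (p + 2)
  | ldivL Δ Pi A B C _ _ ih1 ih2 =>
      rw [trC_plug, trC_append]
      rw [trC_plug] at ih2
      have := DerL.ldivL (trPre Δ) (trPost Δ) (trC Pi) (trF A) (trF B) (trF C) ih1
        (by simpa [trC, trI] using ih2)
      simpa [trC, trI, trF, List.append_assoc] using this
  | ldivR Pi A B _ ih =>
      exact DerL.ldivR _ _ _ (by simpa [trC, trI] using ih)
  | rdivL Δ Pi A B C _ _ ih1 ih2 =>
      rw [trC_plug]
      rw [trC_plug] at ih2
      have := DerL.rdivL (trPre Δ) (trPost Δ) (trC Pi) (trF A) (trF B) (trF C) ih1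
        (by simpa [trC, trI] using ih2)
      simpa [trC, trI, trF, trC_append, List.append_assoc] using this
  | rdivR Pi A B _ ih =>
      exact DerL.rdivR _ _ _ (by simpa [trC, trI, trC_append] using ih)
  | mulL Δ A B C _ ih =>
      rw [trC_plug]
      rw [trC_plug] at ih
      have := DerL.mulL (trPre Δ) (trPost Δ) (trF A) (trF B) (trF C)
        (by simpa [trC, trI] using ih)
      simpa [trC, trI, trF] using this
  | mulR Γ' Δ A B _ _ ih1 ih2 =>
      rw [trC_append]
      exact DerL.mulR _ _ _ _ ih1 ih2
  | diaL Δ A C _ ih =>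
      rw [trC_plug]
      rw [trC_plug] at ih
      have h1 : DerL (trPre Δ ++ [PF.mul rV (trF A)] ++ ([sV] ++ trPost Δ)) (trF C) := by
        have := DerL.mulL (trPre Δ) ([sV] ++ trPost Δ) rV (trF A) (trF C)
          (by simpa [trC, trI, List.append_assoc] using ih)
        simpa using this
      have h2 := DerL.mulL (trPre Δ) (trPost Δ) (PF.mul rV (trF A)) sV (trF C)
        (by simpa [List.append_assoc] using h1)
      simpa [trC, trI, trF] using h2
  | diaR Pi A _ ih =>
      have h1 : DerL ([rV] ++ trC Pi) (PF.mul rV (trF A)) :=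
        DerL.mulR [rV] (trC Pi) rV (trF A) (DerL.ax 0) ih
      have h2 := DerL.mulR ([rV] ++ trC Pi) [sV] (PF.mul rV (trF A)) sV h1 (DerL.ax 1)
      simpa [trC, trI, trF, List.append_assoc] using h2
  | boxL Δ A C _ ih =>
      rw [trC_plug]
      rw [trC_plug] at ih
      have h1 : DerL (trPre Δ ++ [PF.rdiv (trF A) sV] ++ [sV] ++ trPost Δ) (trF C) := by
        have := DerL.rdivL (trPre Δ) (trPost Δ) [sV] sV (trF A) (trF C) (DerL.ax 1)
          (by simpa [trC, trI] using ih)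
        simpa [List.append_assoc] using this
      have h2 := DerL.ldivL (trPre Δ) ([sV] ++ trPost Δ) [rV] rV
        (PF.rdiv (trF A) sV) (trF C) (DerL.ax 0)
        (by simpa [List.append_assoc] using h1)
      simpa [trC, trI, trF, List.append_assoc] using h2
  | boxR Pi A _ ih =>
      refine DerL.ldivR _ _ _ (DerL.rdivR _ _ _ ?_)
      simpa [trC, trI, List.append_assoc] using ih
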